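/- Let λ > 0, γ > 1, and let A be a d×d real symmetric matrix whose smallest eigenvalue is strictly greater than 1/(γ−1). Then the function f : ℝ^d → ℝ defined by f(θ) = (1/2)·θ'Aθ + Σ_{i=1}^d p^{SCAD}_{λ,γ}(|θ_i|) is strictly convex on ℝ^d. -/

import Mathlib

open Matrix

/-- The SCAD (smoothly clipped absolute deviation) penalty: `p(u) = λu` for
`0 ≤ u ≤ λ`, `p(u) = (γλu − 0.5(u² + λ²))/(γ−1)` for `λ < u ≤ γλ`, and
`p(u) = λ²(γ²−1)/(2(γ−1))` for `u > γλ`. -/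
noncomputable def scadPenalty (lam γ : ℝ) (u : ℝ) : ℝ :=
  if u ≤ lam then lam * u
  else if u ≤ γ * lam then (γ * lam * u - 0.5 * (u ^ 2 + lam ^ 2)) / (γ - 1)
  else lam ^ 2 * (γ ^ 2 - 1) / (2 * (γ - 1))

noncomputable def scadAux (lam γ u : ℝ) : ℝ :=
  (γ * lam * u - lam ^ 2 / 2 + (max 0 (lam - u)) ^ 2 / 2 + (max 0 (u - γ * lam)) ^ 2 / 2) / (γ - 1)

lemma scadAux_eq (lam γ : ℝ) (hlam : 0 < lam) (hγ : 1 < γ) (u : ℝ) :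
    scadPenalty lam γ u + u ^ 2 / (2 * (γ - 1)) = scadAux lam γ u := by
  have hγ1 : (0:ℝ) < γ - 1 := by linarith
  have hlg : lam < γ * lam := by nlinarith
  unfold scadPenalty scadAux
  split_ifs with h1 h2
  · rw [max_eq_right (by linarith : (0:ℝ) ≤ lam - u),
        max_eq_left (by linarith : u - γ * lam ≤ 0)]
    field_simp
    ring
  · push_neg at h1
    rw [max_eq_left (by linarith : lam - u ≤ (0:ℝ)),
        max_eq_left (by linarith : u - γ * lam ≤ 0)]
    field_simp
    ring
  · push_neg at h1 h2
    rw [max_eq_left (by linarith : lam - u ≤ (0:ℝ)),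
        max_eq_right (by linarith : (0:ℝ) ≤ u - γ * lam)]
    field_simp
    ring

lemma max_comb (c x y a b : ℝ) (ha : 0 ≤ a) (hb : 0 ≤ b) (hab : a + b = 1) :
    max 0 (a * x + b * y - c) ≤ a * max 0 (x - c) + b * max 0 (y - c) := by
  apply max_le
  · exact add_nonneg (mul_nonneg ha (le_max_left _ _)) (mul_nonneg hb (le_max_left _ _))
  · have h1 := mul_le_mul_of_nonneg_left (le_max_right 0 (x - c)) ha
    have h2 := mul_le_mul_of_nonneg_left (le_max_right 0 (y - c)) hb
    have hc : a * c + b * c = c := by linear_combination c * hab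
    linarith

lemma max_comb' (c x y a b : ℝ) (ha : 0 ≤ a) (hb : 0 ≤ b) (hab : a + b = 1) :
    max 0 (c - (a * x + b * y)) ≤ a * max 0 (c - x) + b * max 0 (c - y) := by
  apply max_le
  · exact add_nonneg (mul_nonneg ha (le_max_left _ _)) (mul_nonneg hb (le_max_left _ _))
  · have h1 := mul_le_mul_of_nonneg_left (le_max_right 0 (c - x)) ha
    have h2 := mul_le_mul_of_nonneg_left (le_max_right 0 (c - y)) hb
    have hc : a * c + b * c = c := by linear_combination c * hab
    linarith

lemma sq_comb (m m1 m2 a b : ℝ) (hm : 0 ≤ m) (h1 : 0 ≤ m1) (h2 : 0 ≤ m2)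
    (h : m ≤ a * m1 + b * m2) (ha : 0 ≤ a) (hb : 0 ≤ b) (hab : a + b = 1) :
    m ^ 2 ≤ a * m1 ^ 2 + b * m2 ^ 2 := by
  have h0 : 0 ≤ a * m1 + b * m2 := add_nonneg (mul_nonneg ha h1) (mul_nonneg hb h2)
  have hsq : m ^ 2 ≤ (a * m1 + b * m2) ^ 2 := by nlinarith
  nlinarith [sq_nonneg (m1 - m2), mul_nonneg ha hb]

lemma scadAux_convexOn (lam γ : ℝ) (hγ : 1 < γ) :
    ConvexOn ℝ Set.univ (scadAux lam γ) := by
  have hγ1 : (0:ℝ) < γ - 1 := by linarith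
  refine ⟨convex_univ, fun x _ y _ a b ha hb hab => ?_⟩
  simp only [smul_eq_mul]
  have hM := max_comb' lam x y a b ha hb hab
  have hN := max_comb (γ * lam) x y a b ha hb hab
  have hM2 := sq_comb _ _ _ a b (le_max_left _ _) (le_max_left _ _) (le_max_left _ _) hM ha hb hab
  have hN2 := sq_comb _ _ _ a b (le_max_left _ _) (le_max_left _ _) (le_max_left _ _) hN ha hb hab
  unfold scadAux
  rw [div_le_iff₀ hγ1]
  have expand : (a * ((γ * lam * x - lam ^ 2 / 2 + (max 0 (lam - x)) ^ 2 / 2 + (max 0 (x - γ * lam)) ^ 2 / 2) / (γ - 1)) +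
      b * ((γ * lam * y - lam ^ 2 / 2 + (max 0 (lam - y)) ^ 2 / 2 + (max 0 (y - γ * lam)) ^ 2 / 2) / (γ - 1))) * (γ - 1)
      = a * (γ * lam * x - lam ^ 2 / 2 + (max 0 (lam - x)) ^ 2 / 2 + (max 0 (x - γ * lam)) ^ 2 / 2)
      + b * (γ * lam * y - lam ^ 2 / 2 + (max 0 (lam - y)) ^ 2 / 2 + (max 0 (y - γ * lam)) ^ 2 / 2) := by
    field_simp
  rw [expand]
  nlinarith [hM2, hN2]

lemma scadAux_mono (lam γ : ℝ) (hlam : 0 < lam) (hγ : 1 < γ) :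
    MonotoneOn (scadAux lam γ) (Set.Ici 0) := by
  intro u hu v hv huv
  have hu0 : (0:ℝ) ≤ u := hu
  have hγ1 : (0:ℝ) < γ - 1 := by linarith
  have hMvu : max 0 (lam - v) ≤ max 0 (lam - u) :=
    max_le (le_max_left _ _) (le_trans (by linarith) (le_max_right 0 (lam - u)))
  have hMul : max 0 (lam - u) ≤ lam := max_le hlam.le (by linarith)
  have hMub : max 0 (lam - u) ≤ max 0 (lam - v) + (v - u) :=
    max_le (by linarith [le_max_left 0 (lam - v)]) (by linarith [le_max_right 0 (lam - v)])
  have hNuv : max 0 (u - γ * lam) ≤ max 0 (v - γ * lam) :=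
    max_le (le_max_left _ _) (le_trans (by linarith) (le_max_right 0 (v - γ * lam)))
  have hMv0 : (0:ℝ) ≤ max 0 (lam - v) := le_max_left _ _
  have hNu0 : (0:ℝ) ≤ max 0 (u - γ * lam) := le_max_left _ _
  unfold scadAux
  rw [div_le_div_iff_of_pos_right hγ1]
  have e1 : (max 0 (lam - u)) ^ 2 ≤ (max 0 (lam - v)) ^ 2 + (v - u) * (2 * lam) := by
    nlinarith [hMub, hMul, hMv0, hMvu]
  have e2 : (max 0 (u - γ * lam)) ^ 2 ≤ (max 0 (v - γ * lam)) ^ 2 := by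
    nlinarith [hNuv, hNu0]
  nlinarith [mul_nonneg (mul_nonneg (by linarith : (0:ℝ) ≤ γ - 1) hlam.le) (sub_nonneg.2 huv)]
lemma scadAuxAbs_convexOn (lam γ : ℝ) (hlam : 0 < lam) (hγ : 1 < γ) :
    ConvexOn ℝ Set.univ (fun u : ℝ => scadAux lam γ |u|) := by
  refine ⟨convex_univ, fun x _ y _ a b ha hb hab => ?_⟩
  simp only [smul_eq_mul]
  have habs : |a * x + b * y| ≤ a * |x| + b * |y| := by
    calc |a * x + b * y| ≤ |a * x| + |b * y| := abs_add_le _ _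
      _ = a * |x| + b * |y| := by rw [abs_mul, abs_mul, abs_of_nonneg ha, abs_of_nonneg hb]
  have h1 : scadAux lam γ |a * x + b * y| ≤ scadAux lam γ (a * |x| + b * |y|) :=
    scadAux_mono lam γ hlam hγ (Set.mem_Ici.2 (abs_nonneg _))
      (Set.mem_Ici.2 (by positivity)) habs
  have h2 := (scadAux_convexOn lam γ hγ).2 (Set.mem_univ |x|) (Set.mem_univ |y|) ha hb hab
  simp only [smul_eq_mul] at h2
  linarith

lemma coord_convexOn {d : ℕ} (i : Fin d) {G : ℝ → ℝ} (hG : ConvexOn ℝ Set.univ G) :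
    ConvexOn ℝ Set.univ (fun θ : Fin d → ℝ => G (θ i)) := by
  refine ⟨convex_univ, fun x _ y _ a b ha hb hab => ?_⟩
  have := hG.2 (Set.mem_univ (x i)) (Set.mem_univ (y i)) ha hb hab
  simpa using this

lemma sum_convexOn {d : ℕ} {G : ℝ → ℝ} (hG : ConvexOn ℝ Set.univ G) :
    ConvexOn ℝ Set.univ (fun θ : Fin d → ℝ => ∑ i, G (θ i)) := by
  classical
  have H : ∀ s : Finset (Fin d),
      ConvexOn ℝ Set.univ (fun θ : Fin d → ℝ => ∑ i ∈ s, G (θ i)) := by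
    intro s
    induction s using Finset.induction with
    | empty => simpa using convexOn_const (0:ℝ) convex_univ
    | insert j s' hns ih =>
        have := (coord_convexOn j hG).add ih
        simp only [Finset.sum_insert hns]; exact this
  exact H Finset.univ

lemma rayleigh {d : ℕ} (A : Matrix (Fin d) (Fin d) ℝ) (hA : A.IsHermitian) (μ : ℝ)
    (h : ∀ i, μ < hA.eigenvalues i) {z : Fin d → ℝ} (hz : z ≠ 0) :
    μ * (z ⬝ᵥ z) < z ⬝ᵥ A *ᵥ z := by
  classical
  set U : Matrix (Fin d) (Fin d) ℝ := (hA.eigenvectorUnitary : Matrix (Fin d) (Fin d) ℝ) with hUdef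
  obtain ⟨hU1, hU2⟩ := Unitary.mem_iff.1 hA.eigenvectorUnitary.2
  set w : Fin d → ℝ := star U *ᵥ z with hwdef
  have hUt : star U = Uᵀ := by
    rw [Matrix.star_eq_conjTranspose, Matrix.conjTranspose_eq_transpose_of_trivial]
  have hzw : z = U *ᵥ w := by
    rw [hwdef, Matrix.mulVec_mulVec, hU2, Matrix.one_mulVec]
  have hw0 : w ≠ 0 := by
    intro h0
    apply hz
    rw [hzw, h0, Matrix.mulVec_zero]
  have hquad : z ⬝ᵥ A *ᵥ z = ∑ i, hA.eigenvalues i * w i ^ 2 := by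
    conv_lhs => rw [hA.spectral_theorem, Unitary.conjStarAlgAut_apply]
    rw [← Matrix.mulVec_mulVec, ← Matrix.mulVec_mulVec, Matrix.dotProduct_mulVec z U,
      ← Matrix.mulVec_transpose, ← hUt, ← hwdef]
    simp [dotProduct, Matrix.mulVec_diagonal]
    exact Finset.sum_congr rfl fun i _ => by ring
  have hnorm : z ⬝ᵥ z = ∑ i, w i ^ 2 := by
    conv_lhs => rw [hzw]
    rw [Matrix.dotProduct_mulVec (U *ᵥ w) U, ← Matrix.mulVec_transpose, ← hUt,
      Matrix.mulVec_mulVec, hU1, Matrix.one_mulVec]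
    simp [dotProduct, pow_two]
  rw [hquad, hnorm, Finset.mul_sum]
  obtain ⟨i0, hi0⟩ := Function.ne_iff.1 hw0
  apply Finset.sum_lt_sum
  · intro i _
    have := (h i).le
    nlinarith [sq_nonneg (w i)]
  · refine ⟨i0, Finset.mem_univ _, ?_⟩
    have hne : w i0 ≠ 0 := by simpa using hi0
    have h1 : 0 < w i0 ^ 2 := (sq_nonneg (w i0)).lt_of_ne (Ne.symm (pow_ne_zero 2 hne))
    nlinarith [h i0]
lemma quad_strictConvexOn {d : ℕ} (A : Matrix (Fin d) (Fin d) ℝ) (hA : A.IsHermitian) (μ : ℝ)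
    (hray : ∀ z : Fin d → ℝ, z ≠ 0 → μ * (z ⬝ᵥ z) < z ⬝ᵥ A *ᵥ z) :
    StrictConvexOn ℝ Set.univ
      (fun θ : Fin d → ℝ => (1 / 2) * (θ ⬝ᵥ A.mulVec θ) - (μ / 2) * (θ ⬝ᵥ θ)) := by
  have hAT : Aᵀ = A := by
    rw [← Matrix.conjTranspose_eq_transpose_of_trivial]; exact hA
  have hsymm : ∀ u v : Fin d → ℝ, u ⬝ᵥ A *ᵥ v = v ⬝ᵥ A *ᵥ u := by
    intro u v
    rw [Matrix.dotProduct_mulVec, ← Matrix.mulVec_transpose, hAT, dotProduct_comm]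
  refine ⟨convex_univ, fun x _ y _ hxy a b ha hb hab => ?_⟩
  have key := hray (x - y) (sub_ne_zero.2 hxy)
  have hb' : b = 1 - a := by linarith
  subst hb'
  simp only [Matrix.mulVec_add, Matrix.mulVec_smul, Matrix.mulVec_sub, dotProduct_add,
    add_dotProduct, dotProduct_smul, smul_dotProduct,
    dotProduct_sub, sub_dotProduct, smul_eq_mul] at key ⊢
  have h1 := hsymm x y
  have h2 := dotProduct_comm x y
  have hab2 : 0 < a * (1 - a) := by nlinarith
  nlinarith [mul_pos hab2 (sub_pos.2 key)]
/-- If `λ > 0`, `γ > 1` and `A` is a `d×d` real symmetric matrix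
whose smallest eigenvalue exceeds `1/(γ−1)`, then
`θ ↦ (1/2)θ'Aθ + Σᵢ p^{SCAD}_{λ,γ}(|θᵢ|)` is strictly convex on `ℝ^d`. -/
theorem scad_penalized_quadratic_strictly_convex
    (lam γ : ℝ) (hlam : 0 < lam) (hγ : 1 < γ)
    {d : ℕ} (A : Matrix (Fin d) (Fin d) ℝ)
    (hA : A.IsHermitian)
    (heig : ∀ i, 1 / (γ - 1) < hA.eigenvalues i) :
    StrictConvexOn ℝ (Set.univ : Set (Fin d → ℝ))
      (fun θ : Fin d → ℝ =>
        (1 / 2) * (θ ⬝ᵥ A.mulVec θ) + ∑ i, scadPenalty lam γ |θ i|) := by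
  have hγ1 : (0:ℝ) < γ - 1 := by linarith
  have hray : ∀ z : Fin d → ℝ, z ≠ 0 → (1 / (γ - 1)) * (z ⬝ᵥ z) < z ⬝ᵥ A *ᵥ z :=
    fun z hz => rayleigh A hA _ heig hz
  have hq := quad_strictConvexOn A hA (1 / (γ - 1)) hray
  have hP := sum_convexOn (d := d) (scadAuxAbs_convexOn lam γ hlam hγ)
  have hsum := hq.add_convexOn hP
  have heqf : (fun θ : Fin d → ℝ =>
        (1 / 2) * (θ ⬝ᵥ A.mulVec θ) + ∑ i, scadPenalty lam γ |θ i|)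
      = (fun θ : Fin d → ℝ =>
          (1 / 2) * (θ ⬝ᵥ A.mulVec θ) - ((1 / (γ - 1)) / 2) * (θ ⬝ᵥ θ))
        + (fun θ : Fin d → ℝ => ∑ i, scadAux lam γ |θ i|) := by
    funext θ
    simp only [Pi.add_apply]
    have h1 : ∀ i : Fin d,
        scadAux lam γ |θ i| = scadPenalty lam γ |θ i| + θ i ^ 2 / (2 * (γ - 1)) := by
      intro i
      rw [← scadAux_eq lam γ hlam hγ |θ i|, sq_abs]
    rw [Finset.sum_congr rfl fun i _ => h1 i, Finset.sum_add_distrib]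
    have hdot : θ ⬝ᵥ θ = ∑ i, θ i ^ 2 := by
      simp [dotProduct, pow_two]
    rw [hdot]
    have h2 : ((1 / (γ - 1)) / 2) * (∑ i, θ i ^ 2) = ∑ i, θ i ^ 2 / (2 * (γ - 1)) := by
      rw [Finset.mul_sum]
      refine Finset.sum_congr rfl fun i _ => ?_
      have hne : γ - 1 ≠ 0 := ne_of_gt hγ1
      field_simp
    linarith [h2]
  rw [heqf]
  exact hsum
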